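/- For all nonnegative integers n and m, the following identity holds in ℚ(q): Σ_{k=0}^{⌊n/2⌋} (−1)^k · q^{2·C(k,2)} · [m+n−2k choose m]_q · [m+1 choose k]_{q^2} = q^{C(n,2)} · [m+1 choose n]_q. -/

import Mathlib

/-- The Gaussian (q-)binomial coefficient `[a choose b]` with parameter `x`,
`∏_{j=1}^{b} (1 - x^{a-b+j})/(1 - x^j)`, an element of `ℚ(q)` when `x = q`;
it is zero when `b > a`. -/
noncomputable def qbinom (x : RatFunc ℚ) (a b : ℕ) : RatFunc ℚ :=
  if b ≤ a then ∏ j ∈ Finset.range b, (1 - x ^ (a - b + j + 1)) / (1 - x ^ (j + 1)) else 0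

/-- The indeterminate `q` of the field of rational functions `ℚ(q)`. -/
noncomputable def q : RatFunc ℚ := RatFunc.X

/-- `x` is not a root of unity (in the weak sense we need). -/
def NRU (x : RatFunc ℚ) : Prop := ∀ j : ℕ, 1 ≤ j → x ^ j ≠ 1

lemma one_sub_pow_ne {x : RatFunc ℚ} (hx : NRU x) (j : ℕ) (hj : 1 ≤ j) :
    (1 : RatFunc ℚ) - x ^ j ≠ 0 := fun h => hx j hj (sub_eq_zero.mp h).symm

lemma qbinom_zero_right (x : RatFunc ℚ) (a : ℕ) : qbinom x a 0 = 1 := by simp [qbinom]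

lemma qbinom_of_lt {x : RatFunc ℚ} {a b : ℕ} (h : a < b) : qbinom x a b = 0 := by
  simp [qbinom, not_le.mpr h]

lemma qbinom_self {x : RatFunc ℚ} (hx : NRU x) (a : ℕ) : qbinom x a a = 1 := by
  rw [qbinom, if_pos le_rfl]
  apply Finset.prod_eq_one
  intro j _
  simp only [Nat.sub_self, Nat.zero_add]
  exact div_self (one_sub_pow_ne hx (j + 1) (by omega))

lemma qbinom_absorb1 {x : RatFunc ℚ} (hx : NRU x) {a b : ℕ} (h : b ≤ a) :
    qbinom x (a + 1) (b + 1) * (1 - x ^ (b + 1)) = qbinom x a b * (1 - x ^ (a + 1)) := by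
  have h1 : b + 1 ≤ a + 1 := by omega
  rw [qbinom, qbinom, if_pos h1, if_pos h]
  have he : a + 1 - (b + 1) = a - b := by omega
  rw [he, Finset.prod_range_succ]
  have hb : a - b + b + 1 = a + 1 := by omega
  rw [hb]
  have hd : (1 : RatFunc ℚ) - x ^ (b + 1) ≠ 0 := one_sub_pow_ne hx _ (by omega)
  rw [mul_assoc, div_mul_cancel₀ _ hd]

lemma qbinom_absorb2 {x : RatFunc ℚ} (hx : NRU x) {a b : ℕ} (h : b ≤ a) :
    qbinom x (a + 1) (b + 1) * (1 - x ^ (a - b)) = qbinom x a (b + 1) * (1 - x ^ (a + 1)) := by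
  rcases eq_or_lt_of_le h with rfl | hlt
  · have hz : qbinom x b (b + 1) = 0 := qbinom_of_lt (by omega)
    rw [hz, Nat.sub_self]
    simp
  · have h1 : b + 1 ≤ a + 1 := by omega
    have h2 : b + 1 ≤ a := by omega
    rw [qbinom, qbinom, if_pos h1, if_pos h2]
    have he : a + 1 - (b + 1) = a - b := by omega
    rw [he]
    have key : ∀ j : ℕ, a - (b+1) + j + 1 = a - b + j := fun j => by omega
    simp only [key]
    rw [Finset.prod_div_distrib, Finset.prod_div_distrib]
    have hnum : (∏ j ∈ Finset.range (b+1), (1 - x ^ (a - b + j + 1))) * (1 - x ^ (a - b))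
        = (∏ j ∈ Finset.range (b+1), (1 - x ^ (a - b + j))) * (1 - x ^ (a + 1)) := by
      have l1 : (∏ j ∈ Finset.range (b+2), (1 - x ^ (a - b + j)))
          = (1 - x ^ (a - b + 0)) * ∏ j ∈ Finset.range (b+1), (1 - x ^ (a - b + (j+1))) := by
        rw [Finset.prod_range_succ']
        exact mul_comm _ _
      have l2 : (∏ j ∈ Finset.range (b+2), (1 - x ^ (a - b + j)))
          = (∏ j ∈ Finset.range (b+1), (1 - x ^ (a - b + j))) * (1 - x ^ (a - b + (b+1))) := by
        rw [Finset.prod_range_succ]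
      have hab : a - b + (b + 1) = a + 1 := by omega
      rw [hab] at l2
      have e : ∀ j : ℕ, a - b + (j + 1) = a - b + j + 1 := fun j => by omega
      simp only [e, add_zero] at l1
      rw [← l2, l1]; ring
    have hden : (∏ j ∈ Finset.range (b+1), (1 - x ^ (j + 1))) ≠ 0 := by
      apply Finset.prod_ne_zero_iff.mpr
      intro j _
      exact one_sub_pow_ne hx _ (by omega)
    rw [div_mul_eq_mul_div, div_mul_eq_mul_div, div_eq_div_iff hden hden]
    linear_combination (∏ j ∈ Finset.range (b+1), (1 - x ^ (j + 1))) * hnum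

lemma qbinom_pascal1 {x : RatFunc ℚ} (hx : NRU x) (a b : ℕ) :
    qbinom x (a + 1) (b + 1) = qbinom x a b + x ^ (b + 1) * qbinom x a (b + 1) := by
  rcases le_or_gt b a with h | h
  · have ha : (1 : RatFunc ℚ) - x ^ (a + 1) ≠ 0 := one_sub_pow_ne hx _ (by omega)
    have key : qbinom x (a + 1) (b + 1) * (1 - x ^ (a + 1))
        = (qbinom x a b + x ^ (b + 1) * qbinom x a (b + 1)) * (1 - x ^ (a + 1)) := by
      have e1 := qbinom_absorb1 hx h
      have e2 := qbinom_absorb2 hx h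
      have hp : x ^ (b + 1) * x ^ (a - b) = x ^ (a + 1) := by
        rw [← pow_add]; congr 1; omega
      calc qbinom x (a + 1) (b + 1) * (1 - x ^ (a + 1))
          = qbinom x (a+1) (b+1) * (1 - x ^ (b+1))
            + x ^ (b+1) * (qbinom x (a+1) (b+1) * (1 - x ^ (a - b))) := by
            linear_combination qbinom x (a+1) (b+1) * hp
        _ = _ := by rw [e1, e2]; ring
    exact mul_right_cancel₀ ha key
  · rw [qbinom_of_lt (show a + 1 < b + 1 by omega), qbinom_of_lt h,
      qbinom_of_lt (show a < b + 1 by omega)]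
    ring

lemma qbinom_pascal2 {x : RatFunc ℚ} (hx : NRU x) (a b : ℕ) :
    qbinom x (a + 1) (b + 1) = qbinom x a (b + 1) + x ^ (a - b) * qbinom x a b := by
  rcases le_or_gt b a with h | h
  · have ha : (1 : RatFunc ℚ) - x ^ (a + 1) ≠ 0 := one_sub_pow_ne hx _ (by omega)
    have key : qbinom x (a + 1) (b + 1) * (1 - x ^ (a + 1))
        = (qbinom x a (b + 1) + x ^ (a - b) * qbinom x a b) * (1 - x ^ (a + 1)) := by
      have e1 := qbinom_absorb1 hx h
      have e2 := qbinom_absorb2 hx h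
      have hp : x ^ (a - b) * x ^ (b + 1) = x ^ (a + 1) := by
        rw [← pow_add]; congr 1; omega
      calc qbinom x (a + 1) (b + 1) * (1 - x ^ (a + 1))
          = qbinom x (a+1) (b+1) * (1 - x ^ (a - b))
            + x ^ (a - b) * (qbinom x (a+1) (b+1) * (1 - x ^ (b+1))) := by
            linear_combination qbinom x (a+1) (b+1) * hp
        _ = _ := by rw [e1, e2]; ring
    exact mul_right_cancel₀ ha key
  · rw [qbinom_of_lt (show a + 1 < b + 1 by omega), qbinom_of_lt h,
      qbinom_of_lt (show a < b + 1 by omega)]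
    ring

lemma q_NRU : NRU q := by
  intro j hj h
  have : (algebraMap (Polynomial ℚ) (RatFunc ℚ)) (Polynomial.X ^ j)
      = algebraMap (Polynomial ℚ) (RatFunc ℚ) 1 := by
    rw [map_pow, RatFunc.algebraMap_X, map_one]
    exact h
  have h2 := RatFunc.algebraMap_injective ℚ this
  have := congrArg Polynomial.natDegree h2
  simp [Polynomial.natDegree_X_pow] at this
  omega

lemma q2_NRU : NRU (q ^ 2) := by
  intro j hj
  rw [← pow_mul]
  exact q_NRU (2 * j) (by omega)

/-! ### Power series -/

open PowerSeries

noncomputable def Dser (m : ℕ) : PowerSeries (RatFunc ℚ) :=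
  ∏ i ∈ Finset.range (m + 1), (1 - PowerSeries.C (q ^ i) * PowerSeries.X)

noncomputable def Aser (m : ℕ) : PowerSeries (RatFunc ℚ) :=
  ∏ i ∈ Finset.range (m + 1), (1 + PowerSeries.C (q ^ i) * PowerSeries.X)

noncomputable def Bser (m : ℕ) : PowerSeries (RatFunc ℚ) :=
  ∏ i ∈ Finset.range (m + 1), (1 - PowerSeries.C ((q ^ 2) ^ i) * PowerSeries.X ^ 2)

noncomputable def Hser (m : ℕ) : PowerSeries (RatFunc ℚ) :=
  PowerSeries.mk fun n => qbinom q (m + n) m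

lemma coeff_mul_C_X_pow (F : PowerSeries (RatFunc ℚ)) (c : RatFunc ℚ) (d n : ℕ) :
    PowerSeries.coeff n (F * (PowerSeries.C c * PowerSeries.X ^ d))
      = if d ≤ n then c * PowerSeries.coeff (n - d) F else 0 := by
  rw [show F * (PowerSeries.C c * PowerSeries.X ^ d)
      = (F * PowerSeries.X ^ d) * PowerSeries.C c by ring,
    PowerSeries.coeff_mul_C, PowerSeries.coeff_mul_X_pow']
  split_ifs <;> ring

lemma coeff_mul_one_add (F : PowerSeries (RatFunc ℚ)) (c : RatFunc ℚ) (n : ℕ) :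
    PowerSeries.coeff n (F * (1 + PowerSeries.C c * PowerSeries.X))
      = PowerSeries.coeff n F
        + (if 1 ≤ n then c * PowerSeries.coeff (n - 1) F else 0) := by
  rw [mul_add, mul_one, map_add]
  congr 1
  rw [show (PowerSeries.X : PowerSeries (RatFunc ℚ)) = PowerSeries.X ^ 1 by rw [pow_one]]
  exact coeff_mul_C_X_pow F c 1 n

lemma coeff_mul_one_sub_sq (F : PowerSeries (RatFunc ℚ)) (c : RatFunc ℚ) (n : ℕ) :
    PowerSeries.coeff n (F * (1 - PowerSeries.C c * PowerSeries.X ^ 2))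
      = PowerSeries.coeff n F
        - (if 2 ≤ n then c * PowerSeries.coeff (n - 2) F else 0) := by
  rw [mul_sub, mul_one, map_sub]
  congr 1
  exact coeff_mul_C_X_pow F c 2 n

lemma coeff_one_sub_mul (F : PowerSeries (RatFunc ℚ)) (c : RatFunc ℚ) (n : ℕ) :
    PowerSeries.coeff n ((1 - PowerSeries.C c * PowerSeries.X) * F)
      = PowerSeries.coeff n F
        - (if 1 ≤ n then c * PowerSeries.coeff (n - 1) F else 0) := by
  rw [mul_comm, mul_sub, mul_one, map_sub]
  congr 1
  rw [show (PowerSeries.X : PowerSeries (RatFunc ℚ)) = PowerSeries.X ^ 1 by rw [pow_one]]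
  exact coeff_mul_C_X_pow F c 1 n

lemma Hser_step (m : ℕ) :
    (1 - PowerSeries.C (q ^ (m + 1)) * PowerSeries.X) * Hser (m + 1) = Hser m := by
  ext n
  rw [coeff_one_sub_mul, Hser, Hser, PowerSeries.coeff_mk, PowerSeries.coeff_mk]
  cases n with
  | zero =>
      simp [qbinom_self q_NRU]
  | succ k =>
      rw [if_pos (by omega), PowerSeries.coeff_mk]
      have hp := qbinom_pascal1 q_NRU (m + k + 1) m
      have e1 : m + 1 + (k + 1) = m + k + 1 + 1 := by omega
      have e2 : m + 1 + (k + 1 - 1) = m + k + 1 := by omega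
      have e3 : m + (k + 1) = m + k + 1 := by omega
      rw [e1, e2, e3]
      linear_combination hp

lemma Dser_Hser (m : ℕ) : Dser m * Hser m = 1 := by
  induction m with
  | zero =>
      rw [Dser, Finset.prod_range_one, pow_zero]
      ext n
      rw [coeff_one_sub_mul, Hser, PowerSeries.coeff_mk, PowerSeries.coeff_mk]
      cases n with
      | zero => simp [qbinom_zero_right]
      | succ k =>
          rw [if_pos (by omega)]
          simp [qbinom_zero_right, PowerSeries.coeff_one]
  | succ m ih =>
      have : Dser (m + 1) = Dser m * (1 - PowerSeries.C (q ^ (m + 1)) * PowerSeries.X) := by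
        rw [Dser, Dser, Finset.prod_range_succ]
      rw [this, mul_assoc, Hser_step, ih]

lemma coeff_Aser (m n : ℕ) :
    PowerSeries.coeff n (Aser m) = q ^ n.choose 2 * qbinom q (m + 1) n := by
  induction m generalizing n with
  | zero =>
      rw [Aser, Finset.prod_range_one, pow_zero, map_one, one_mul]
      rw [map_add, PowerSeries.coeff_one, PowerSeries.coeff_X]
      match n with
      | 0 => simp [qbinom_zero_right]
      | 1 => simp [qbinom_self q_NRU]
      | (k + 2) => simp [qbinom_of_lt (show 1 < k + 2 by omega), Nat.choose]
  | succ m ih =>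
      have hA : Aser (m + 1) = Aser m * (1 + PowerSeries.C (q ^ (m + 1)) * PowerSeries.X) := by
        rw [Aser, Aser, Finset.prod_range_succ]
      rw [hA, coeff_mul_one_add, ih]
      cases n with
      | zero => simp [qbinom_zero_right]
      | succ k =>
          rw [if_pos (by omega), Nat.add_sub_cancel, ih]
          have hp := qbinom_pascal2 q_NRU (m + 1) k
          rcases le_or_gt k (m + 1) with hk | hk
          · have hch : (k + 1).choose 2 = k.choose 2 + k := by
              rw [Nat.choose_succ_succ]
              simp [Nat.choose_one_right, Nat.add_comm]
            have hq : q ^ (k + 1).choose 2 * q ^ (m + 1 - k)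
                = q ^ (m + 1) * q ^ k.choose 2 := by
              rw [← pow_add, ← pow_add]; congr 1; omega
            linear_combination (-(q ^ ((k + 1).choose 2))) * hp - qbinom q (m + 1) k * hq
          · rw [qbinom_of_lt (show m + 1 + 1 < k + 1 by omega),
              qbinom_of_lt (show m + 1 < k + 1 by omega),
              qbinom_of_lt (show m + 1 < k by omega)]
            ring

lemma coeff_Bser (m n : ℕ) :
    PowerSeries.coeff n (Bser m)
      = if 2 ∣ n then
          (-1 : RatFunc ℚ) ^ (n / 2) * q ^ (2 * Nat.choose (n / 2) 2)
            * qbinom (q ^ 2) (m + 1) (n / 2)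
        else 0 := by
  induction m generalizing n with
  | zero =>
      rw [Bser, Finset.prod_range_one, pow_zero, map_one, one_mul]
      rw [map_sub, PowerSeries.coeff_one, PowerSeries.coeff_X_pow]
      by_cases h2 : 2 ∣ n
      · obtain ⟨k, rfl⟩ := h2
        have hd1 : 2 ∣ 2 * k := dvd_mul_right 2 k
        simp only [hd1, if_true, Nat.mul_div_cancel_left k (by norm_num : 0 < 2)]
        match k with
        | 0 => norm_num [qbinom_zero_right]
        | 1 => norm_num [qbinom_self q2_NRU]
        | (j + 2) =>
            rw [qbinom_of_lt (show 1 < j + 2 by omega)]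
            have e0 : ¬(2 * (j + 2) = 0) := by omega
            have e2 : ¬(2 * (j + 2) = 2) := by omega
            simp [e0, e2]
      · have h0 : ¬(n = 0) := by rintro rfl; exact h2 ⟨0, rfl⟩
        have h2' : ¬(n = 2) := by rintro rfl; exact h2 ⟨1, rfl⟩
        simp [h0, h2', h2]
  | succ m ih =>
      have hB : Bser (m + 1)
          = Bser m * (1 - PowerSeries.C ((q ^ 2) ^ (m + 1)) * PowerSeries.X ^ 2) := by
        rw [Bser, Bser, Finset.prod_range_succ]
      rw [hB, coeff_mul_one_sub_sq, ih]
      by_cases h2 : 2 ∣ n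
      · obtain ⟨k, rfl⟩ := h2
        have hd1 : 2 ∣ 2 * k := dvd_mul_right 2 k
        simp only [hd1, if_true, Nat.mul_div_cancel_left k (by norm_num : 0 < 2)]
        match k with
        | 0 => simp [qbinom_zero_right]
        | (j + 1) =>
            rw [if_pos (show 2 ≤ 2 * (j + 1) by omega), ih,
              show 2 * (j + 1) - 2 = 2 * j by omega]
            have hd2 : 2 ∣ 2 * j := dvd_mul_right 2 j
            simp only [hd2, if_true, Nat.mul_div_cancel_left j (by norm_num : 0 < 2)]
            have hp := qbinom_pascal2 q2_NRU (m + 1) j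
            rcases le_or_gt j (m + 1) with hj | hj
            · have hch : (j + 1).choose 2 = j.choose 2 + j := by
                rw [Nat.choose_succ_succ]
                simp [Nat.choose_one_right, Nat.add_comm]
              have hq : q ^ (2 * Nat.choose (j + 1) 2) * (q ^ 2) ^ (m + 1 - j)
                  = (q ^ 2) ^ (m + 1) * q ^ (2 * Nat.choose j 2) := by
                rw [← pow_mul, ← pow_mul, ← pow_add, ← pow_add]; congr 1; omega
              have hsign : (-1 : RatFunc ℚ) ^ (j + 1) = -(-1 : RatFunc ℚ) ^ j := by
                rw [pow_succ]; ring
              rw [hsign]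
              linear_combination ((-1 : RatFunc ℚ) ^ j * q ^ (2 * Nat.choose (j + 1) 2)) * hp
                + ((-1 : RatFunc ℚ) ^ j * qbinom (q ^ 2) (m + 1) j) * hq
            · rw [qbinom_of_lt (show m + 1 + 1 < j + 1 by omega),
                qbinom_of_lt (show m + 1 < j + 1 by omega),
                qbinom_of_lt (show m + 1 < j by omega)]
              ring
      · simp only [if_neg h2]
        rcases le_or_gt 2 n with hn | hn
        · rw [if_pos hn, ih, if_neg (by rintro ⟨t, ht⟩; exact h2 ⟨t + 1, by omega⟩)]
          ring
        · rw [if_neg (by omega)]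
          ring

lemma Bser_eq (m : ℕ) : Bser m = Dser m * Aser m := by
  rw [Bser, Dser, Aser, ← Finset.prod_mul_distrib]
  apply Finset.prod_congr rfl
  intro i _
  have hc : PowerSeries.C (R := RatFunc ℚ) ((q ^ 2) ^ i) = (PowerSeries.C (R := RatFunc ℚ) (q ^ i)) ^ 2 := by
    rw [← map_pow]
    congr 1
    rw [← pow_mul, ← pow_mul, mul_comm]
  rw [hc]
  ring

lemma Bser_Hser (m : ℕ) : Bser m * Hser m = Aser m := by
  rw [Bser_eq, mul_right_comm, Dser_Hser, one_mul]

theorem stmt_13 (n m : ℕ) :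
    ∑ k ∈ Finset.range (n / 2 + 1),
      (-1 : RatFunc ℚ) ^ k * q ^ (2 * Nat.choose k 2) * qbinom q (m + n - 2 * k) m *
        qbinom (q ^ 2) (m + 1) k
    = q ^ Nat.choose n 2 * qbinom q (m + 1) n := by
  have hc := congrArg (PowerSeries.coeff (R := RatFunc ℚ) n) (Bser_Hser m)
  rw [PowerSeries.coeff_mul, Finset.Nat.sum_antidiagonal_eq_sum_range_succ_mk,
    coeff_Aser] at hc
  set f : ℕ → RatFunc ℚ := fun i =>
    PowerSeries.coeff (R := RatFunc ℚ) i (Bser m) * PowerSeries.coeff (R := RatFunc ℚ) (n - i) (Hser m)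
    with hf
  have him : ∑ i ∈ Finset.range (n + 1), f i = ∑ k ∈ Finset.range (n / 2 + 1), f (2 * k) := by
    have h1 : ∑ k ∈ Finset.range (n / 2 + 1), f (2 * k)
        = ∑ i ∈ (Finset.range (n / 2 + 1)).image (fun k => 2 * k), f i := by
      rw [Finset.sum_image]
      intro a _ b _ h
      simp only at h
      omega
    rw [h1]
    apply (Finset.sum_subset ?_ ?_).symm
    · intro i hi
      simp only [Finset.mem_image, Finset.mem_range] at hi ⊢
      obtain ⟨k, hk, rfl⟩ := hi
      omega
    · intro i hi hni
      simp only [Finset.mem_image, Finset.mem_range] at hi hni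
      have hodd : ¬(2 ∣ i) := by
        rintro ⟨t, rfl⟩
        exact hni ⟨t, by omega, by omega⟩
      rw [hf]
      simp only [coeff_Bser, if_neg hodd, zero_mul]
  rw [him] at hc
  rw [← hc]
  apply Finset.sum_congr rfl
  intro k hk
  simp only [Finset.mem_range] at hk
  rw [hf]
  have hd1 : 2 ∣ 2 * k := dvd_mul_right 2 k
  simp only [coeff_Bser, hd1, if_true, Nat.mul_div_cancel_left k (by norm_num : 0 < 2),
    Hser, PowerSeries.coeff_mk]
  rw [show m + (n - 2 * k) = m + n - 2 * k by omega]
  ring
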